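/- Assume λ₁,…,λ_m ∈ ℂ* are pairwise distinct. For any nonzero g in the tensor product T = ⊗_{k=1}^m Ω(α_k,β_k,γ_k,λ_k,g_k), set R_g = dim span_ℂ{g, a_n g, c_n g : n ∈ ℤ}. Then R_g ≥ m+1, with equality if and only if g lies in N = ℂ[t₁]⊗⋯⊗ℂ[t_m] (i.e., g involves no s-variables). -/

import Mathlib

/- STATEMENT 19: for pairwise distinct `λ_k`, and any nonzero `f` in the tensor product `T`, the dimension `R_f` of `span{f, a_n f, c_n f : n ∈ ℤ}` satisfies `R_f ≥ m+1`, with equality iff `f` lies in `N = ℂ[t₁]⊗⋯⊗ℂ[t_m]` (no `s`-variables). -/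
noncomputable section

open MvPolynomial

/-- the tensor product `⊗_{k=1}^m ℂ[s_k, t_k]`, realized as the polynomial
ring in the variables `s_k = X (Sum.inl k)`, `t_k = X (Sum.inr k)`. -/
abbrev TT (m : ℕ) : Type := MvPolynomial (Fin m ⊕ Fin m) ℂ

/-- substitution `s_k ↦ s_k - n`, all other variables fixed. -/
noncomputable def shf {m : ℕ} (k : Fin m) (n : ℤ) (f : TT m) : TT m :=
  MvPolynomial.aeval (Function.update (MvPolynomial.X : Fin m ⊕ Fin m → TT m)
    (Sum.inl k) (MvPolynomial.X (Sum.inl k) - MvPolynomial.C (n : ℂ))) f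

/-- `g_k(t_k)` as an element of the big polynomial ring. -/
noncomputable def gT {m : ℕ} (g : Fin m → Polynomial ℂ) (k : Fin m) : TT m :=
  Polynomial.aeval (MvPolynomial.X (Sum.inr k) : TT m) (g k)

variable {m : ℕ}

/-- diagonal action of `L_n`. -/
noncomputable def tL (α lam : Fin m → ℂ) (n : ℤ) (f : TT m) : TT m :=
  ∑ k : Fin m, (lam k ^ n) •
    ((MvPolynomial.X (Sum.inl k) + MvPolynomial.C ((n : ℂ) * α k)) * shf k n f)

/-- diagonal action of `d_n`. -/
noncomputable def tD (β γ lam : Fin m → ℂ) (g : Fin m → Polynomial ℂ) (n : ℤ) (f : TT m) :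
    TT m :=
  ∑ k : Fin m,
    ((lam k ^ n * (β k)⁻¹) •
        ((MvPolynomial.X (Sum.inr k) * gT g k + MvPolynomial.C (γ k)) * shf k n f)
      + (lam k ^ n) •
        (MvPolynomial.X (Sum.inr k) * MvPolynomial.pderiv (Sum.inr k) (shf k n f)))

/-- diagonal action of `a_n`. -/
noncomputable def tA (lam : Fin m → ℂ) (n : ℤ) (f : TT m) : TT m :=
  ∑ k : Fin m, (lam k ^ n) • (MvPolynomial.X (Sum.inr k) * shf k n f)

/-- diagonal action of `b_n`. -/
noncomputable def tB (β lam : Fin m → ℂ) (g : Fin m → Polynomial ℂ) (n : ℤ) (f : TT m) :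
    TT m :=
  ∑ k : Fin m,
    ((lam k ^ n) • (gT g k * shf k n f)
      + (lam k ^ n * β k) • MvPolynomial.pderiv (Sum.inr k) (shf k n f))

/-- diagonal action of `c_n`. -/
noncomputable def tC (β lam : Fin m → ℂ) (n : ℤ) (f : TT m) : TT m :=
  ∑ k : Fin m, (-(lam k ^ n) * β k) • shf k n f

namespace Aux

open Finsupp

variable {m : ℕ}

/-- the weight function: `s`-variables have weight `B`, `t`-variables weight 1. -/
def wt (m B : ℕ) : Fin m ⊕ Fin m → ℕ := Sum.elim (fun _ => B) fun _ => 1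

lemma weight_single (B : ℕ) (i : Fin m ⊕ Fin m) (n : ℕ) :
    weight (wt m B) (Finsupp.single i n) = n * wt m B i := by
  rw [weight_apply, Finsupp.sum_single_index] <;> simp [mul_comm]

lemma weight_erase_add (B : ℕ) (l : Fin m ⊕ Fin m) (ν : (Fin m ⊕ Fin m) →₀ ℕ) :
    weight (wt m B) (Finsupp.erase l ν) + ν l * wt m B l = weight (wt m B) ν := by
  conv_rhs => rw [← Finsupp.erase_add_single l ν]
  rw [map_add, weight_single]

lemma pi_monomial (B v : ℕ) (ν : (Fin m ⊕ Fin m) →₀ ℕ) (c : ℂ) :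
    weightedHomogeneousComponent (wt m B) v (monomial ν c)
      = if weight (wt m B) ν = v then monomial ν c else 0 := by
  ext d
  rw [coeff_weightedHomogeneousComponent]
  split_ifs with h1 h2 h2
  · rfl
  · rw [coeff_monomial, if_neg, coeff_zero]
    rintro rfl; exact h2 h1
  · rw [coeff_monomial, if_neg]
    rintro rfl; exact h1 h2
  · simp

lemma shf_mul (k : Fin m) (n : ℤ) (p q : TT m) :
    shf k n (p * q) = shf k n p * shf k n q := by
  unfold shf; exact map_mul _ _ _

/-- the shift of a monomial, expanded by the binomial theorem. -/
lemma shf_monomial (k : Fin m) (n : ℤ) (ν : (Fin m ⊕ Fin m) →₀ ℕ) (c : ℂ) :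
    shf k n (monomial ν c) =
      ∑ i ∈ Finset.range (ν (Sum.inl k) + 1),
        monomial (Finsupp.erase (Sum.inl k) ν + Finsupp.single (Sum.inl k) i)
          (c * (Nat.choose (ν (Sum.inl k)) i : ℂ) * (-(n : ℂ)) ^ (ν (Sum.inl k) - i)) := by
  set l : Fin m ⊕ Fin m := Sum.inl k with hl
  have hsplit : monomial ν c
      = monomial (Finsupp.erase l ν) c * monomial (Finsupp.single l (ν l)) 1 := by
    rw [monomial_mul, mul_one, Finsupp.erase_add_single]
  have h1 : shf k n (monomial (Finsupp.erase l ν) c) = monomial (Finsupp.erase l ν) c := by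
    unfold shf
    rw [aeval_monomial]
    rw [Finsupp.prod_congr (g2 := fun i e => (X i : TT m) ^ e) ?_]
    · rw [monomial_eq, algebraMap_eq]
    · intro i hi
      have : i ≠ l := by
        intro h; subst h
        simp [Finsupp.mem_support_iff] at hi
      rw [Function.update_of_ne this]
  have h2 : shf k n (monomial (Finsupp.single l (ν l)) 1)
      = (X l - C (n : ℂ)) ^ (ν l) := by
    unfold shf
    rw [← X_pow_eq_monomial, map_pow, aeval_X, Function.update_self]
  rw [hsplit, shf_mul, h1, h2, sub_eq_add_neg, add_pow]
  rw [Finset.mul_sum]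
  refine Finset.sum_congr rfl fun i _ => ?_
  rw [X_pow_eq_monomial]
  rw [show (-C (↑n:ℂ) : TT m) = C (-(n:ℂ)) by rw [map_neg], ← C_pow,
    show ((((ν l).choose i) : ℕ) : TT m) = C (((ν l).choose i : ℕ) : ℂ) by simp]
  simp only [C_apply, monomial_mul, mul_one, add_zero]
  congr 1
  ring


section PiShf

variable (B v D : ℕ) (k : Fin m) (n : ℤ) (ν : (Fin m ⊕ Fin m) →₀ ℕ) (c : ℂ)

lemma weight_nu : weight (wt m B) ν
    = weight (wt m B) (Finsupp.erase (Sum.inl k) ν) + ν (Sum.inl k) * B := by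
  rw [← weight_erase_add B (Sum.inl k) ν]; rfl

/-- `π_v (shf k n (monomial ν c))` as an explicit sum of `ite`s. -/
lemma pi_shf_monomial :
    weightedHomogeneousComponent (wt m B) v (shf k n (monomial ν c))
      = ∑ i ∈ Finset.range (ν (Sum.inl k) + 1),
          if weight (wt m B) (Finsupp.erase (Sum.inl k) ν) + i * B = v then
            monomial (Finsupp.erase (Sum.inl k) ν + Finsupp.single (Sum.inl k) i)
              (c * (Nat.choose (ν (Sum.inl k)) i : ℂ) * (-(n : ℂ)) ^ (ν (Sum.inl k) - i))
          else 0 := by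
  rw [shf_monomial, map_sum]
  refine Finset.sum_congr rfl fun i _ => ?_
  rw [pi_monomial]
  congr 1
  rw [map_add, weight_single]
  rfl

variable {B v D ν}

lemma mul_cancel_key (hB : 1 ≤ B) {E i j : ℕ} (h : E + i * B = E + j * B) : i = j := by
  have := Nat.add_left_cancel h
  exact Nat.eq_of_mul_eq_mul_right (by omega) this

lemma pi_shf_monomial_high (hB : 1 ≤ B) (hν : weight (wt m B) ν ≤ D) (hv : D < v) :
    weightedHomogeneousComponent (wt m B) v (shf k n (monomial ν c)) = 0 := by
  rw [pi_shf_monomial]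
  refine Finset.sum_eq_zero fun i hi => ?_
  rw [Finset.mem_range] at hi
  rw [if_neg]
  intro h
  have hw := weight_nu B k ν
  have : i * B ≤ ν (Sum.inl k) * B := Nat.mul_le_mul_right _ (by omega)
  omega

lemma pi_shf_monomial_top (hB : 1 ≤ B) (hν : weight (wt m B) ν ≤ D) :
    weightedHomogeneousComponent (wt m B) D (shf k n (monomial ν c))
      = weightedHomogeneousComponent (wt m B) D (monomial ν c) := by
  have hw := weight_nu B k ν
  set a := ν (Sum.inl k) with ha
  set E := weight (wt m B) (Finsupp.erase (Sum.inl k) ν) with hE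
  rw [pi_shf_monomial, pi_monomial]
  by_cases hWD : weight (wt m B) ν = D
  · rw [if_pos hWD]
    rw [Finset.sum_eq_single a]
    · rw [if_pos (by omega), Nat.choose_self, Nat.sub_self, pow_zero, Nat.cast_one, mul_one,
        mul_one, Finsupp.erase_add_single]
    · intro i hi hne
      rw [Finset.mem_range] at hi
      rw [if_neg]
      intro h
      exact hne (mul_cancel_key hB (h.trans (by omega)))
    · intro h
      exact absurd (Finset.mem_range.mpr (by omega)) h
  · rw [if_neg hWD]
    refine Finset.sum_eq_zero fun i hi => ?_
    rw [Finset.mem_range] at hi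
    rw [if_neg]
    intro h
    have : i * B ≤ a * B := Nat.mul_le_mul_right _ (by omega)
    have hia : i = a := by
      by_contra hne
      have hilt : i < a := by omega
      have : i * B + B ≤ a * B := by
        calc i * B + B = (i+1) * B := by ring
        _ ≤ a * B := Nat.mul_le_mul_right _ (by omega)
      omega
    exact hWD (by omega)

lemma pi_shf_monomial_mid (hB : 1 ≤ B) (hν : weight (wt m B) ν ≤ D) (hvB : v + B = D) :
    weightedHomogeneousComponent (wt m B) v (shf k n (monomial ν c))
      = weightedHomogeneousComponent (wt m B) v (monomial ν c)
        + (-(n : ℂ)) • pderiv (Sum.inl k)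
            (weightedHomogeneousComponent (wt m B) D (monomial ν c)) := by
  have hw := weight_nu B k ν
  set a := ν (Sum.inl k) with ha
  set E := weight (wt m B) (Finsupp.erase (Sum.inl k) ν) with hE
  rw [pi_shf_monomial, pi_monomial, pi_monomial]
  by_cases hWD : weight (wt m B) ν = D
  · have hWv : weight (wt m B) ν ≠ v := by omega
    rw [if_neg hWv, if_pos hWD, zero_add]
    by_cases hA : a = 0
    · rw [Finset.sum_eq_zero, pderiv_monomial, ← ha, hA, Nat.cast_zero, mul_zero,
        map_zero, smul_zero]
      intro i hi
      rw [Finset.mem_range] at hi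
      rw [if_neg]
      intro h
      have hi0 : i = 0 := by omega
      rw [hi0, zero_mul, add_zero] at h
      rw [hA, zero_mul, add_zero] at hw
      omega
    · rw [Finset.sum_eq_single (a - 1)]
      · rw [if_pos (by
          have h3 : (a - 1) * B + B = a * B := by
            have h4 : a - 1 + 1 = a := by omega
            calc (a-1) * B + B = (a - 1 + 1) * B := by ring
            _ = a * B := by rw [h4]
          omega)]
        have hfin : Finsupp.erase (Sum.inl k) ν + Finsupp.single (Sum.inl k) (a - 1)
            = ν - Finsupp.single (Sum.inl k) 1 := by
          ext j
          rw [Finsupp.add_apply, Finsupp.tsub_apply]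
          by_cases hj : j = Sum.inl k
          · subst hj
            rw [Finsupp.erase_same, Finsupp.single_eq_same, Finsupp.single_eq_same]
            omega
          · rw [Finsupp.erase_ne hj, Finsupp.single_eq_of_ne' (Ne.symm hj),
              Finsupp.single_eq_of_ne' (Ne.symm hj)]
            omega
        rw [pderiv_monomial, smul_monomial, hfin]
        have hch : a.choose (a - 1) = a := by
          rw [← Nat.choose_symm (by omega : a - 1 ≤ a), Nat.sub_sub_self (by omega : 1 ≤ a),
            Nat.choose_one_right]
        rw [← ha, hch, show a - (a-1) = 1 by omega, pow_one, smul_eq_mul]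
        congr 1
        ring
      · intro i hi hne
        rw [Finset.mem_range] at hi
        rw [if_neg]
        intro h
        have h2 : E + (a-1) * B = v := by
          have h3 : (a - 1) * B + B = a * B := by
            calc (a-1) * B + B = (a - 1 + 1) * B := by ring
            _ = a * B := by rw [show a - 1 + 1 = a by omega]
          omega
        exact hne (mul_cancel_key hB (h.trans h2.symm))
      · intro h
        exact absurd (Finset.mem_range.mpr (by omega)) h
  · rw [if_neg hWD, map_zero, smul_zero, add_zero]
    by_cases hWv : weight (wt m B) ν = v
    · rw [if_pos hWv]
      rw [Finset.sum_eq_single a]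
      · rw [if_pos (by omega), Nat.choose_self, Nat.sub_self, pow_zero, Nat.cast_one, mul_one,
          mul_one, Finsupp.erase_add_single]
      · intro i hi hne
        rw [Finset.mem_range] at hi
        rw [if_neg]
        intro h
        exact hne (mul_cancel_key hB (h.trans (by omega)))
      · intro h
        exact absurd (Finset.mem_range.mpr (by omega)) h
    · rw [if_neg hWv]
      refine Finset.sum_eq_zero fun i hi => ?_
      rw [Finset.mem_range] at hi
      rw [if_neg]
      intro h
      by_cases hia : i = a
      · refine hWv ?_
        rw [hw, ← hia]
        exact h
      · have hstep : i * B + B ≤ a * B := by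
          have h1 : i + 1 ≤ a := by omega
          calc i * B + B = (i+1) * B := by ring
          _ ≤ a * B := Nat.mul_le_mul_right _ h1
        refine hWD (le_antisymm hν ?_)
        rw [hw]
        calc D = v + B := hvB.symm
        _ = E + i * B + B := by rw [h]
        _ = E + (i * B + B) := by ring
        _ ≤ E + a * B := Nat.add_le_add_left hstep E

lemma shf_apply_sum (f : TT m) : shf k n f
    = ∑ ν ∈ f.support, shf k n (monomial ν (coeff ν f)) := by
  unfold shf
  conv_lhs => rw [f.as_sum]
  rw [map_sum]

variable {f : TT m} (hB : 1 ≤ B) (hsupp : ∀ ν ∈ f.support, weight (wt m B) ν ≤ D)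
include hB hsupp

lemma pi_shf_high (hv : D < v) :
    weightedHomogeneousComponent (wt m B) v (shf k n f) = 0 := by
  rw [shf_apply_sum, map_sum]
  exact Finset.sum_eq_zero fun ν hν => pi_shf_monomial_high k n _ hB (hsupp ν hν) hv

lemma pi_shf_top :
    weightedHomogeneousComponent (wt m B) D (shf k n f)
      = weightedHomogeneousComponent (wt m B) D f := by
  rw [shf_apply_sum, map_sum,
    Finset.sum_congr rfl (fun ν hν => pi_shf_monomial_top k n _ hB (hsupp ν hν)),
    ← map_sum, ← f.as_sum]

lemma pi_shf_mid (hvB : v + B = D) :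
    weightedHomogeneousComponent (wt m B) v (shf k n f)
      = weightedHomogeneousComponent (wt m B) v f
        + (-(n : ℂ)) • pderiv (Sum.inl k)
            (weightedHomogeneousComponent (wt m B) D f) := by
  rw [shf_apply_sum, map_sum,
    Finset.sum_congr rfl (fun ν hν => pi_shf_monomial_mid k n _ hB (hsupp ν hν) hvB),
    Finset.sum_add_distrib, ← Finset.smul_sum, ← map_sum, ← map_sum, ← map_sum, ← f.as_sum]

end PiShf

section Actions

variable {B v D : ℕ} {f : TT m} (β lam : Fin m → ℂ) (n : ℤ)
variable (hB : 1 ≤ B) (hsupp : ∀ ν ∈ f.support, weight (wt m B) ν ≤ D)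

lemma pi_tC (v : ℕ) : weightedHomogeneousComponent (wt m B) v (tC β lam n f)
    = ∑ k : Fin m, (-(lam k ^ n) * β k) •
        weightedHomogeneousComponent (wt m B) v (shf k n f) := by
  unfold tC
  rw [map_sum]
  exact Finset.sum_congr rfl fun k _ => (weightedHomogeneousComponent (wt m B) v).map_smul _ _

lemma pi_tA (v : ℕ) : weightedHomogeneousComponent (wt m B) v (tA lam n f)
    = ∑ k : Fin m, (lam k ^ n) •
        weightedHomogeneousComponent (wt m B) v (X (Sum.inr k) * shf k n f) := by
  unfold tA
  rw [map_sum]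
  exact Finset.sum_congr rfl fun k _ => (weightedHomogeneousComponent (wt m B) v).map_smul _ _

/-- multiplication by a `t`-variable raises the weighted degree by exactly 1. -/
lemma pi_X_inr_mul (j : Fin m) (p : TT m) (v : ℕ) :
    weightedHomogeneousComponent (wt m B) (v + 1) (X (Sum.inr j) * p)
      = X (Sum.inr j) * weightedHomogeneousComponent (wt m B) v p := by
  conv_lhs => rw [p.as_sum]
  rw [Finset.mul_sum, map_sum]
  rw [show ∑ ν ∈ p.support,
      weightedHomogeneousComponent (wt m B) (v + 1) (X (Sum.inr j) * monomial ν (coeff ν p))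
      = ∑ ν ∈ p.support, X (Sum.inr j) *
          weightedHomogeneousComponent (wt m B) v (monomial ν (coeff ν p)) from ?_]
  · rw [← Finset.mul_sum, ← map_sum, ← p.as_sum]
  refine Finset.sum_congr rfl fun ν hν => ?_
  rw [show (X (Sum.inr j) : TT m) = monomial (Finsupp.single (Sum.inr j) 1) 1 from rfl,
    monomial_mul, one_mul, pi_monomial, pi_monomial, map_add, weight_single,
    show wt m B (Sum.inr j) = 1 from rfl, mul_one]
  by_cases h : weight (wt m B) ν = v
  · rw [if_pos (by omega), if_pos h, monomial_mul, one_mul]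
  · rw [if_neg (by omega), if_neg h, mul_zero]

end Actions


section Main

variable {B v D : ℕ} {f : TT m} {β lam : Fin m → ℂ} {n : ℤ}

lemma pi_f_high (hsupp : ∀ ν ∈ f.support, weight (wt m B) ν ≤ D) (hv : D < v) :
    weightedHomogeneousComponent (wt m B) v f = 0 :=
  weightedHomogeneousComponent_eq_zero' _ _ fun ν hν => by
    have := hsupp ν hν; omega

lemma pi_tA_top (hB : 1 ≤ B) (hsupp : ∀ ν ∈ f.support, weight (wt m B) ν ≤ D) :
    weightedHomogeneousComponent (wt m B) (D + 1) (tA lam n f)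
      = ∑ k : Fin m, (lam k ^ n) •
          (X (Sum.inr k) * weightedHomogeneousComponent (wt m B) D f) := by
  rw [pi_tA]
  exact Finset.sum_congr rfl fun k _ => by
    rw [pi_X_inr_mul, pi_shf_top k n hB hsupp]

lemma pi_tC_top (hB : 1 ≤ B) (hsupp : ∀ ν ∈ f.support, weight (wt m B) ν ≤ D) :
    weightedHomogeneousComponent (wt m B) D (tC β lam n f)
      = (∑ k : Fin m, (-(lam k ^ n) * β k)) •
          weightedHomogeneousComponent (wt m B) D f := by
  rw [pi_tC, Finset.sum_smul]
  exact Finset.sum_congr rfl fun k _ => by rw [pi_shf_top k n hB hsupp]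

lemma pi_tC_high (hB : 1 ≤ B) (hsupp : ∀ ν ∈ f.support, weight (wt m B) ν ≤ D)
    (hv : D < v) :
    weightedHomogeneousComponent (wt m B) v (tC β lam n f) = 0 := by
  rw [pi_tC]
  exact Finset.sum_eq_zero fun k _ => by
    rw [pi_shf_high k n hB hsupp hv, smul_zero]

lemma pi_tC_mid (hB : 1 ≤ B) (hsupp : ∀ ν ∈ f.support, weight (wt m B) ν ≤ D)
    (hvB : v + B = D) :
    weightedHomogeneousComponent (wt m B) v (tC β lam n f)
      = ∑ k : Fin m, (-(lam k ^ n) * β k) •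
          (weightedHomogeneousComponent (wt m B) v f
            + (-(n : ℂ)) • pderiv (Sum.inl k)
                (weightedHomogeneousComponent (wt m B) D f)) := by
  rw [pi_tC]
  exact Finset.sum_congr rfl fun k _ => by rw [pi_shf_mid k n hB hsupp hvB]

lemma coeff_sum_smul_X (P : Fin m → ℂ) (k : Fin m) :
    coeff (Finsupp.single (Sum.inr k) 1) (∑ j : Fin m, P j • (X (Sum.inr j) : TT m)) = P k := by
  rw [coeff_sum]
  rw [Finset.sum_congr rfl (fun (j : Fin m) _ =>
    coeff_smul (Finsupp.single (Sum.inr k) 1) (P j) (X (Sum.inr j) : TT m))]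
  rw [Finset.sum_eq_single k]
  · rw [show (X (Sum.inr k) : TT m) = monomial (Finsupp.single (Sum.inr k) 1) 1 from rfl,
      coeff_monomial, if_pos rfl, smul_eq_mul, mul_one]
  · intro j _ hne
    rw [show (X (Sum.inr j) : TT m) = monomial (Finsupp.single (Sum.inr j) 1) 1 from rfl,
      coeff_monomial, if_neg, smul_zero]
    intro h
    have h2 : (Sum.inr j : Fin m ⊕ Fin m) = Sum.inr k :=
      (Finsupp.single_left_inj one_ne_zero).mp h
    exact hne (by simpa using h2)
  · intro h
    exact absurd (Finset.mem_univ k) h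

lemma vandermonde_zero (hdist : Function.Injective lam) (d : Fin m → ℂ)
    (h : ∀ k, ∑ j : Fin m, d j * lam k ^ (j : ℕ) = 0) : d = 0 := by
  apply Matrix.eq_zero_of_mulVec_eq_zero
    (show (Matrix.vandermonde lam).det ≠ 0 from
      (Matrix.det_vandermonde_ne_zero_iff).mpr hdist)
  funext k
  rw [Matrix.mulVec, dotProduct]
  simpa [Matrix.vandermonde_apply, mul_comm] using h k

lemma vandermonde_extract (hdist : Function.Injective lam) (μ : Fin m → ℂ)
    (v : Fin m → TT m)
    (h : ∀ N : Fin m, ∑ k : Fin m, (μ k * lam k ^ (N : ℕ)) • v k = 0) (k : Fin m) :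
    μ k • v k = 0 := by
  have key : ∀ τ : (Fin m ⊕ Fin m) →₀ ℕ, μ k * coeff τ (v k) = 0 := by
    intro τ
    have hx : (fun j => μ j * coeff τ (v j)) = 0 := by
      apply Matrix.eq_zero_of_mulVec_eq_zero
        (show ((Matrix.vandermonde lam).transpose).det ≠ 0 from by
          rw [Matrix.det_transpose]
          exact (Matrix.det_vandermonde_ne_zero_iff).mpr hdist)
      funext N
      rw [Matrix.mulVec, dotProduct]
      have h5 := congrArg (coeff τ) (h N)
      rw [coeff_sum, coeff_zero] at h5
      simp only [Pi.zero_apply]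
      rw [← h5]
      refine Finset.sum_congr rfl fun j _ => ?_
      rw [coeff_smul, Matrix.transpose_apply, Matrix.vandermonde_apply, smul_eq_mul]
      ring
    exact congrFun hx k
  ext τ
  rw [coeff_smul, smul_eq_mul, coeff_zero]
  exact key τ

/-- the key relation lemma: any relation `c•f + ∑ d_j • (a_j f) + e•CN = 0` with
`CN` having no components in weights `D` and `D+1` must have `c = 0`, `d = 0`. -/
lemma key_rel (hB : 1 ≤ B) (hsupp : ∀ ν ∈ f.support, weight (wt m B) ν ≤ D)
    (hF : weightedHomogeneousComponent (wt m B) D f ≠ 0)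
    (hdist : Function.Injective lam)
    (c e : ℂ) (d : Fin m → ℂ) (CN : TT m)
    (hCN1 : weightedHomogeneousComponent (wt m B) (D + 1) CN = 0)
    (hCN0 : weightedHomogeneousComponent (wt m B) D CN = 0)
    (hrel : c • f + (∑ j : Fin m, d j • tA lam ((j : ℕ) : ℤ) f) + e • CN = 0) :
    c = 0 ∧ d = 0 ∧ e • CN = 0 := by
  set F := weightedHomogeneousComponent (wt m B) D f with hFdef
  have hd : d = 0 := by
    have h1 := congrArg (weightedHomogeneousComponent (wt m B) (D + 1)) hrel
    simp only [map_add, map_smul, map_zero, map_sum] at h1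
    rw [pi_f_high hsupp (by omega), smul_zero, zero_add, hCN1, smul_zero, add_zero] at h1
    rw [Finset.sum_congr rfl (fun (j : Fin m) _ => by
      rw [pi_tA_top (lam := lam) (n := ((j:ℕ):ℤ)) hB hsupp] :
        ∀ j ∈ Finset.univ, d j • weightedHomogeneousComponent (wt m B) (D+1)
          (tA lam ((j : ℕ) : ℤ) f) = d j • ∑ k : Fin m, (lam k ^ ((j:ℕ):ℤ)) •
            (X (Sum.inr k) * F))] at h1
    have h2 : ∑ j : Fin m, d j • ∑ k : Fin m, (lam k ^ ((j:ℕ):ℤ)) • (X (Sum.inr k) * F)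
        = (∑ k : Fin m, (∑ j : Fin m, d j * lam k ^ (j : ℕ)) • (X (Sum.inr k) : TT m)) * F := by
      rw [Finset.sum_mul]
      rw [show ∑ j : Fin m, d j • ∑ k : Fin m, (lam k ^ ((j:ℕ):ℤ)) • (X (Sum.inr k) * F)
          = ∑ j : Fin m, ∑ k : Fin m, (d j * lam k ^ ((j:ℕ))) • (X (Sum.inr k) * F) from
        Finset.sum_congr rfl fun j _ => by
          rw [Finset.smul_sum]
          exact Finset.sum_congr rfl fun k _ => by rw [smul_smul, zpow_natCast]]
      rw [Finset.sum_comm]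
      refine Finset.sum_congr rfl fun k _ => ?_
      rw [smul_mul_assoc, ← Finset.sum_smul]
    rw [h2] at h1
    rcases mul_eq_zero.mp h1 with h3 | h3
    · refine vandermonde_zero hdist d fun k => ?_
      have := congrArg (coeff (Finsupp.single (Sum.inr k) 1)) h3
      rw [coeff_sum_smul_X, coeff_zero] at this
      exact this
    · exact absurd h3 hF
  refine ⟨?_, hd, ?_⟩
  · have h1 := congrArg (weightedHomogeneousComponent (wt m B) D) hrel
    rw [hd] at hrel
    simp only [Pi.zero_apply, zero_smul, Finset.sum_const_zero, add_zero, zero_add] at hrel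
    have h4 := congrArg (weightedHomogeneousComponent (wt m B) D) hrel
    rw [map_add, map_smul, map_smul, hCN0, smul_zero, add_zero, map_zero, ← hFdef] at h4
    exact (smul_eq_zero.mp h4).resolve_right hF
  · rw [hd] at hrel
    simp only [Pi.zero_apply, zero_smul, Finset.sum_const_zero, add_zero, zero_add] at hrel
    have hc : c = 0 := by
      have h4 := congrArg (weightedHomogeneousComponent (wt m B) D) hrel
      rw [map_add, map_smul, map_smul, hCN0, smul_zero, add_zero, map_zero, ← hFdef] at h4
      exact (smul_eq_zero.mp h4).resolve_right hF
    rw [hc, zero_smul, zero_add] at hrel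
    exact hrel

end Main


section Poly

open Polynomial

lemma sum_coeff_mul_n_pow {M : ℕ} (p : Polynomial ℂ) (hp : p.natDegree < M) (x : ℂ) :
    ∑ n ∈ Finset.range M, p.coeff n * (n : ℂ) * x ^ n
      = x * (Polynomial.derivative p).eval x := by
  obtain ⟨M', rfl⟩ : ∃ M', M = M' + 1 := ⟨M - 1, by omega⟩
  have hd : (Polynomial.derivative p).natDegree < M' + 1 :=
    lt_of_le_of_lt (Polynomial.natDegree_derivative_le p) (by omega)
  rw [Polynomial.eval_eq_sum_range' hd, Finset.mul_sum]
  rw [Finset.sum_congr rfl (fun i _ => by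
    rw [Polynomial.coeff_derivative] :
    ∀ i ∈ Finset.range (M' + 1), x * ((Polynomial.derivative p).coeff i * x ^ i)
      = x * (p.coeff (i+1) * ((i:ℂ) + 1) * x ^ i))]
  rw [Finset.sum_range_succ' (fun n => p.coeff n * (n : ℂ) * x ^ n) M']
  rw [Finset.sum_range_succ (fun i => x * (p.coeff (i+1) * ((i:ℂ)+1) * x^i)) M']
  rw [Polynomial.coeff_eq_zero_of_natDegree_lt (by omega : p.natDegree < M' + 1)]
  simp only [Nat.cast_zero, mul_zero, zero_mul, add_zero, zero_add, mul_one]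
  refine Finset.sum_congr rfl fun i _ => ?_
  push_cast
  ring

lemma scal1 {M : ℕ} (p : Polynomial ℂ) (hp : p.natDegree < M) (x : ℂ) (N : ℕ)
    (hx : p.eval x = 0) :
    ∑ n ∈ Finset.range M, p.coeff n * x ^ (n + N) = 0 := by
  rw [Finset.sum_congr rfl (fun n _ => by rw [pow_add, ← mul_assoc] :
    ∀ n ∈ Finset.range M, p.coeff n * x ^ (n + N) = (p.coeff n * x ^ n) * x ^ N)]
  rw [← Finset.sum_mul, ← Polynomial.eval_eq_sum_range' hp, hx, zero_mul]

lemma scal2 {M : ℕ} (p : Polynomial ℂ) (hp : p.natDegree < M) (x : ℂ) (N : ℕ)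
    (hx : p.eval x = 0) :
    ∑ n ∈ Finset.range M, p.coeff n * ((n + N : ℕ) : ℂ) * x ^ (n + N)
      = x ^ (N + 1) * (Polynomial.derivative p).eval x := by
  rw [Finset.sum_congr rfl (fun n _ => by push_cast; rw [pow_add]; ring :
    ∀ n ∈ Finset.range M, p.coeff n * ((n + N : ℕ) : ℂ) * x ^ (n + N)
      = (p.coeff n * (n:ℂ) * x ^ n) * x ^ N + (p.coeff n * x ^ n) * ((N : ℂ) * x ^ N))]
  rw [Finset.sum_add_distrib, ← Finset.sum_mul, ← Finset.sum_mul,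
    ← Polynomial.eval_eq_sum_range' hp, hx, zero_mul, add_zero,
    sum_coeff_mul_n_pow p hp x]
  ring

/-- the polynomial `∏ (X - lam k)`. -/
def Epoly (lam : Fin m → ℂ) : Polynomial ℂ :=
  ∏ k : Fin m, (Polynomial.X - Polynomial.C (lam k))

lemma Epoly_natDegree (lam : Fin m → ℂ) : (Epoly lam).natDegree = m := by
  rw [Epoly, Polynomial.natDegree_prod _ _ (fun k _ => Polynomial.X_sub_C_ne_zero (lam k))]
  simp [Polynomial.natDegree_X_sub_C]

lemma Epoly_eval (lam : Fin m → ℂ) (k : Fin m) : (Epoly lam).eval (lam k) = 0 := by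
  rw [Epoly, Polynomial.eval_prod]
  exact Finset.prod_eq_zero (Finset.mem_univ k) (by simp)

lemma Epoly_deriv_ne {lam : Fin m → ℂ} (hdist : Function.Injective lam) (k : Fin m) :
    (Polynomial.derivative (Epoly lam)).eval (lam k) ≠ 0 := by
  have hsplit : Epoly lam = (Polynomial.X - Polynomial.C (lam k)) *
      ∏ j ∈ Finset.univ.erase k, (Polynomial.X - Polynomial.C (lam j)) :=
    (Finset.mul_prod_erase _ _ (Finset.mem_univ k)).symm
  rw [hsplit, Polynomial.derivative_mul]
  rw [show Polynomial.derivative (Polynomial.X - Polynomial.C (lam k)) = 1 by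
    rw [Polynomial.derivative_sub, Polynomial.derivative_X, Polynomial.derivative_C, sub_zero]]
  rw [Polynomial.eval_add, Polynomial.eval_mul, Polynomial.eval_mul, Polynomial.eval_one,
    one_mul, Polynomial.eval_sub, Polynomial.eval_X, Polynomial.eval_C, sub_self, zero_mul,
    add_zero, Polynomial.eval_prod]
  refine Finset.prod_ne_zero_iff.mpr fun j hj => ?_
  rw [Polynomial.eval_sub, Polynomial.eval_X, Polynomial.eval_C]
  exact sub_ne_zero_of_ne fun h => (Finset.mem_erase.mp hj).1 (hdist h.symm)

end Poly

section CN

variable {B v D : ℕ} {f : TT m} {β lam : Fin m → ℂ}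

/-- the combination `∑_n E_n c_{n+N} f` killing the two top weighted components. -/
def CNvec (β lam : Fin m → ℂ) (f : TT m) (N : ℕ) : TT m :=
  ∑ n ∈ Finset.range (m + 1), (Epoly lam).coeff n • tC β lam ((n + N : ℕ) : ℤ) f

variable (hB : 1 ≤ B) (hsupp : ∀ ν ∈ f.support, weight (wt m B) ν ≤ D)

include hB hsupp in
lemma pi_CN_high (hv : D < v) (N : ℕ) :
    weightedHomogeneousComponent (wt m B) v (CNvec β lam f N) = 0 := by
  rw [CNvec, map_sum]
  exact Finset.sum_eq_zero fun n _ => by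
    rw [map_smul, pi_tC_high hB hsupp hv, smul_zero]

include hB hsupp in
lemma pi_CN_top (N : ℕ) :
    weightedHomogeneousComponent (wt m B) D (CNvec β lam f N) = 0 := by
  rw [CNvec, map_sum]
  rw [Finset.sum_congr rfl (fun n _ => by
    rw [map_smul, pi_tC_top hB hsupp, smul_smul] :
    ∀ n ∈ Finset.range (m+1), weightedHomogeneousComponent (wt m B) D
      ((Epoly lam).coeff n • tC β lam ((n + N : ℕ) : ℤ) f)
      = ((Epoly lam).coeff n * ∑ k : Fin m, (-(lam k ^ ((n + N : ℕ) : ℤ)) * β k)) •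
          weightedHomogeneousComponent (wt m B) D f)]
  rw [← Finset.sum_smul]
  rw [show ∑ n ∈ Finset.range (m+1),
      ((Epoly lam).coeff n * ∑ k : Fin m, (-(lam k ^ ((n + N : ℕ) : ℤ)) * β k)) = 0 from ?_,
    zero_smul]
  rw [Finset.sum_congr rfl (fun n _ => Finset.mul_sum _ _ _), Finset.sum_comm]
  refine Finset.sum_eq_zero fun k _ => ?_
  rw [Finset.sum_congr rfl (fun n _ => by rw [zpow_natCast]; ring :
    ∀ n ∈ Finset.range (m+1), (Epoly lam).coeff n * (-(lam k ^ ((n + N : ℕ) : ℤ)) * β k)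
      = (-(β k)) * ((Epoly lam).coeff n * lam k ^ (n + N)))]
  rw [← Finset.mul_sum, scal1 (Epoly lam) (by rw [Epoly_natDegree]; omega) (lam k) N
    (Epoly_eval lam k), mul_zero]

include hB hsupp in
lemma pi_CN_mid (hvB : v + B = D) (N : ℕ) :
    weightedHomogeneousComponent (wt m B) v (CNvec β lam f N)
      = ∑ k : Fin m,
          ((β k * (lam k * (Polynomial.derivative (Epoly lam)).eval (lam k))) * lam k ^ N) •
            pderiv (Sum.inl k) (weightedHomogeneousComponent (wt m B) D f) := by
  set F := weightedHomogeneousComponent (wt m B) D f with hF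
  set P := weightedHomogeneousComponent (wt m B) v f with hP
  have hterm : ∀ (a s t : ℂ) (x y : TT m), a • (s • (x + t • y))
      = (a * s) • x + (a * s * t) • y := by
    intros a s t x y
    simp only [smul_add, smul_smul, mul_assoc]
  rw [CNvec, map_sum]
  rw [Finset.sum_congr rfl (fun n _ => by
    rw [map_smul, pi_tC_mid hB hsupp hvB, Finset.smul_sum] :
    ∀ n ∈ Finset.range (m+1), weightedHomogeneousComponent (wt m B) v
      ((Epoly lam).coeff n • tC β lam ((n + N : ℕ) : ℤ) f)
      = ∑ k : Fin m, (Epoly lam).coeff n •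
          ((-(lam k ^ ((n + N : ℕ) : ℤ)) * β k) •
            (P + (-(((n + N : ℕ) : ℤ) : ℂ)) • pderiv (Sum.inl k) F)))]
  rw [Finset.sum_comm]
  refine Finset.sum_congr rfl fun k _ => ?_
  rw [Finset.sum_congr rfl (fun n _ => hterm _ _ _ _ _)]
  rw [Finset.sum_add_distrib, ← Finset.sum_smul, ← Finset.sum_smul]
  rw [show ∑ n ∈ Finset.range (m+1),
      (Epoly lam).coeff n * (-(lam k ^ ((n + N : ℕ) : ℤ)) * β k) = 0 from ?_, zero_smul, zero_add,
    show ∑ n ∈ Finset.range (m+1),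
      (Epoly lam).coeff n * (-(lam k ^ ((n + N : ℕ) : ℤ)) * β k) * (-(((n + N : ℕ) : ℤ) : ℂ))
      = (β k * (lam k * (Polynomial.derivative (Epoly lam)).eval (lam k))) * lam k ^ N from ?_]
  · rw [Finset.sum_congr rfl (fun n _ => by rw [zpow_natCast]; push_cast; ring :
      ∀ n ∈ Finset.range (m+1),
        (Epoly lam).coeff n * (-(lam k ^ ((n + N : ℕ) : ℤ)) * β k) * (-(((n + N : ℕ) : ℤ) : ℂ))
        = β k * ((Epoly lam).coeff n * ((n + N : ℕ) : ℂ) * lam k ^ (n + N)))]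
    rw [← Finset.mul_sum, scal2 (Epoly lam) (by rw [Epoly_natDegree]; omega) (lam k) N
      (Epoly_eval lam k)]
    ring
  · rw [Finset.sum_congr rfl (fun n _ => by rw [zpow_natCast]; ring :
      ∀ n ∈ Finset.range (m+1), (Epoly lam).coeff n * (-(lam k ^ ((n + N : ℕ) : ℤ)) * β k)
        = (-(β k)) * ((Epoly lam).coeff n * lam k ^ (n + N)))]
    rw [← Finset.mul_sum, scal1 (Epoly lam) (by rw [Epoly_natDegree]; omega) (lam k) N
      (Epoly_eval lam k), mul_zero]

end CN

section Misc

variable {f : TT m}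

lemma shf_fix (k : Fin m) (n : ℤ) (hf : f ∈ MvPolynomial.supported ℂ (Set.range Sum.inr)) :
    shf k n f = f := by
  have hf' : f ∈ Algebra.adjoin ℂ ((X : Fin m ⊕ Fin m → TT m) '' Set.range Sum.inr) := hf
  clear hf
  induction hf' using Algebra.adjoin_induction with
  | mem x hx =>
    obtain ⟨i, ⟨j, rfl⟩, rfl⟩ := hx
    unfold shf
    rw [aeval_X, Function.update_of_ne (by simp)]
  | algebraMap r =>
    unfold shf
    rw [show (algebraMap ℂ (TT m)) r = (C r : TT m) from rfl, aeval_C]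
    rfl
  | add x y hx hy ihx ihy =>
    unfold shf at *
    rw [map_add, ihx, ihy]
  | mul x y hx hy ihx ihy =>
    unfold shf at *
    rw [map_mul, ihx, ihy]

lemma weight_le_degree_of_no_inl (B : ℕ) (τ : (Fin m ⊕ Fin m) →₀ ℕ)
    (h : ∀ k : Fin m, τ (Sum.inl k) = 0) :
    weight (wt m B) τ ≤ τ.sum fun _ e => e := by
  rw [weight_apply, Finsupp.sum, Finsupp.sum]
  apply Finset.sum_le_sum
  intro i hi
  match i with
  | Sum.inl k =>
    rw [Finsupp.mem_support_iff] at hi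
    exact absurd (h k) hi
  | Sum.inr k =>
    rw [smul_eq_mul, show wt m B (Sum.inr k) = 1 from rfl, mul_one]

lemma coeff_pderiv_ne_zero (l : Fin m ⊕ Fin m) (F : TT m) (τ : (Fin m ⊕ Fin m) →₀ ℕ)
    (hτ : τ ∈ F.support) (hl : τ l ≠ 0) : pderiv l F ≠ 0 := by
  intro h0
  have key : coeff (τ - Finsupp.single l 1) (pderiv l F) = (coeff τ F) * (τ l : ℂ) := by
    conv_lhs => rw [F.as_sum, map_sum, coeff_sum]
    rw [Finset.sum_eq_single τ]
    · rw [pderiv_monomial, coeff_monomial, if_pos rfl]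
    · intro ν hν hne
      rw [pderiv_monomial, coeff_monomial]
      by_cases hνl : ν l = 0
      · rw [hνl, Nat.cast_zero, mul_zero]
        split_ifs <;> rfl
      · rw [if_neg]
        intro heq
        refine hne ?_
        ext j
        have hthis := DFunLike.congr_fun heq j
        rw [Finsupp.tsub_apply, Finsupp.tsub_apply] at hthis
        by_cases hj : j = l
        · subst hj
          rw [Finsupp.single_eq_same] at hthis
          omega
        · rw [Finsupp.single_eq_of_ne' (Ne.symm hj)] at hthis
          omega
    · intro hτ'
      exact absurd hτ hτ'
  rw [h0, coeff_zero] at key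
  rw [MvPolynomial.mem_support_iff] at hτ
  have : (τ l : ℂ) ≠ 0 := Nat.cast_ne_zero.mpr hl
  exact hτ (by
    rcases mul_eq_zero.mp key.symm with h | h
    · exact h
    · exact absurd h this)

lemma rank_lower {ι : Type} [Fintype ι] (S : Submodule ℂ (TT m)) (v : ι → TT m)
    (hv : ∀ i, v i ∈ S) (hli : LinearIndependent ℂ v) :
    (Cardinal.mk ι) ≤ Module.rank ℂ S := by
  have h2 : LinearIndependent ℂ (fun i => (⟨v i, hv i⟩ : S)) := by
    apply LinearIndependent.of_comp S.subtype
    exact hli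
  exact h2.cardinal_le_rank

end Misc

section Assembly

open Finsupp

variable {β lam : Fin m → ℂ} {f : TT m}

/-- disjointness/rank lower bound for the family `{a_j f} ∪ {f, CN}`. -/
lemma rank_ge_of_CN (hβ : ∀ k, β k ≠ 0) (hlam : ∀ k, lam k ≠ 0)
    (hdist : Function.Injective lam) (hf : f ≠ 0)
    {B D : ℕ} (hB : 1 ≤ B) (hsupp : ∀ ν ∈ f.support, weight (wt m B) ν ≤ D)
    (hFne : weightedHomogeneousComponent (wt m B) D f ≠ 0)
    (CN : TT m) (hCNne : CN ≠ 0)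
    (hCN1 : weightedHomogeneousComponent (wt m B) (D + 1) CN = 0)
    (hCN0 : weightedHomogeneousComponent (wt m B) D CN = 0)
    (S : Submodule ℂ (TT m)) (hmemf : f ∈ S)
    (hmemA : ∀ j : Fin m, tA lam ((j : ℕ) : ℤ) f ∈ S) (hmemCN : CN ∈ S) :
    ((m : Cardinal) + 2) ≤ Module.rank ℂ S := by
  classical
  have hli : LinearIndependent ℂ
      (Sum.elim (fun j : Fin m => tA lam ((j : ℕ) : ℤ) f) (![f, CN])) := by
    rw [Fintype.linearIndependent_iff]
    intro g hg
    rw [Fintype.sum_sum_type] at hg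
    simp only [Sum.elim_inl, Sum.elim_inr] at hg
    rw [Fin.sum_univ_two] at hg
    simp only [Matrix.cons_val_zero, Matrix.cons_val_one, Matrix.head_cons] at hg
    have hrel : g (Sum.inr 0) • f + (∑ j : Fin m, g (Sum.inl j) • tA lam ((j : ℕ) : ℤ) f)
        + g (Sum.inr 1) • CN = 0 := by
      rw [← hg]; abel
    obtain ⟨hc, hd, he⟩ := key_rel hB hsupp hFne hdist _ _ _ _ hCN1 hCN0 hrel
    have he' : g (Sum.inr 1) = 0 := by
      rcases smul_eq_zero.mp he with h | h
      · exact h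
      · exact absurd h hCNne
    intro i
    match i with
    | Sum.inl j => exact congrFun hd j
    | Sum.inr 0 => exact hc
    | Sum.inr 1 => exact he'
  have hcard : (Cardinal.mk (Fin m ⊕ Fin 2)) = (m : Cardinal) + 2 := by simp
  rw [← hcard]
  refine rank_lower S _ (fun i => ?_) hli
  match i with
  | Sum.inl j => exact hmemA j
  | Sum.inr 0 => exact hmemf
  | Sum.inr 1 => exact hmemCN

lemma rank_ge_base (hβ : ∀ k, β k ≠ 0) (hlam : ∀ k, lam k ≠ 0)
    (hdist : Function.Injective lam) (hf : f ≠ 0)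
    {B D : ℕ} (hB : 1 ≤ B) (hsupp : ∀ ν ∈ f.support, weight (wt m B) ν ≤ D)
    (hFne : weightedHomogeneousComponent (wt m B) D f ≠ 0)
    (S : Submodule ℂ (TT m)) (hmemf : f ∈ S)
    (hmemA : ∀ j : Fin m, tA lam ((j : ℕ) : ℤ) f ∈ S) :
    ((m : Cardinal) + 1) ≤ Module.rank ℂ S := by
  classical
  have hli : LinearIndependent ℂ
      (Sum.elim (fun j : Fin m => tA lam ((j : ℕ) : ℤ) f) (![f])) := by
    rw [Fintype.linearIndependent_iff]
    intro g hg
    rw [Fintype.sum_sum_type] at hg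
    simp only [Sum.elim_inl, Sum.elim_inr] at hg
    rw [Fin.sum_univ_one] at hg
    simp only [Matrix.cons_val_zero] at hg
    have hrel : g (Sum.inr 0) • f + (∑ j : Fin m, g (Sum.inl j) • tA lam ((j : ℕ) : ℤ) f)
        + (0 : ℂ) • (0 : TT m) = 0 := by
      rw [smul_zero, add_zero, ← hg]; abel
    obtain ⟨hc, hd, -⟩ := key_rel hB hsupp hFne hdist _ _ _ _ (map_zero _) (map_zero _) hrel
    intro i
    match i with
    | Sum.inl j => exact congrFun hd j
    | Sum.inr 0 => exact hc
  have hcard : (Cardinal.mk (Fin m ⊕ Fin 1)) = (m : Cardinal) + 1 := by simp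
  rw [← hcard]
  refine rank_lower S _ (fun i => ?_) hli
  match i with
  | Sum.inl j => exact hmemA j
  | Sum.inr 0 => exact hmemf

end Assembly

end Aux

open Finsupp in
theorem rank_ge_m_add_one
    (m : ℕ) (α β γ lam : Fin m → ℂ) (g : Fin m → Polynomial ℂ)
    (hβ : ∀ k, β k ≠ 0) (hlam : ∀ k, lam k ≠ 0) (hdist : Function.Injective lam)
    (f : TT m) (hf : f ≠ 0) :
    ((m + 1 : Cardinal) ≤ Module.rank ℂ
        (Submodule.span ℂ ({f} ∪ Set.range (fun n : ℤ => tA lam n f)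
          ∪ Set.range (fun n : ℤ => tC β lam n f)))) ∧
    (Module.rank ℂ
        (Submodule.span ℂ ({f} ∪ Set.range (fun n : ℤ => tA lam n f)
          ∪ Set.range (fun n : ℤ => tC β lam n f)))
        = (m + 1 : Cardinal)
      ↔ f ∈ MvPolynomial.supported ℂ (Set.range Sum.inr)) := by
  classical
  set S := Submodule.span ℂ ({f} ∪ Set.range (fun n : ℤ => tA lam n f)
    ∪ Set.range (fun n : ℤ => tC β lam n f)) with hSdef
  set B := f.totalDegree + 1 with hBdef
  have hB : 1 ≤ B := by omega
  set D := weightedTotalDegree (Aux.wt m B) f with hDdef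
  have hsupp : ∀ ν ∈ f.support, weight (Aux.wt m B) ν ≤ D :=
    fun ν hν => le_weightedTotalDegree _ hν
  set F := weightedHomogeneousComponent (Aux.wt m B) D f with hFdef
  have hFsup : ∀ τ ∈ F.support, τ ∈ f.support ∧ weight (Aux.wt m B) τ = D := by
    intro τ hτ
    rw [MvPolynomial.mem_support_iff] at hτ
    rw [hFdef, coeff_weightedHomogeneousComponent] at hτ
    split_ifs at hτ with hcond
    · exact ⟨MvPolynomial.mem_support_iff.mpr hτ, hcond⟩
    · exact absurd rfl hτ
  have hFne : F ≠ 0 := by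
    obtain ⟨ν, hν, hsup⟩ := Finset.exists_mem_eq_sup f.support
      (MvPolynomial.support_nonempty.mpr hf) (fun ν => weight (Aux.wt m B) ν)
    intro h0
    have hc : coeff ν F = coeff ν f := by
      rw [hFdef, coeff_weightedHomogeneousComponent, if_pos (by rw [hDdef]; exact hsup.symm)]
    rw [h0, coeff_zero] at hc
    exact (MvPolynomial.mem_support_iff.mp hν) hc.symm
  -- membership
  have hmemf : f ∈ S :=
    Submodule.subset_span (Set.mem_union_left _ (Set.mem_union_left _ rfl))
  have hmemA : ∀ n : ℤ, tA lam n f ∈ S := fun n =>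
    Submodule.subset_span (Set.mem_union_left _ (Set.mem_union_right _ ⟨n, rfl⟩))
  have hmemC : ∀ n : ℤ, tC β lam n f ∈ S := fun n =>
    Submodule.subset_span (Set.mem_union_right _ ⟨n, rfl⟩)
  have part1 : ((m : Cardinal) + 1) ≤ Module.rank ℂ S :=
    Aux.rank_ge_base hβ hlam hdist hf hB hsupp hFne S hmemf (fun j => hmemA _)
  refine ⟨part1, ?_, ?_⟩
  · -- equality → f ∈ N
    intro hrank
    by_contra hfN
    -- f ∉ N : get B ≤ D
    have hBD : B ≤ D := by
      rw [MvPolynomial.mem_supported] at hfN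
      have : ∃ i ∈ f.vars, i ∉ Set.range Sum.inr := by
        by_contra hno
        push_neg at hno
        exact hfN fun i hi => hno i hi
      obtain ⟨i, hiv, hir⟩ := this
      obtain ⟨k₀, rfl⟩ : ∃ k₀ : Fin m, i = Sum.inl k₀ := by
        match i with
        | Sum.inl k => exact ⟨k, rfl⟩
        | Sum.inr k => exact absurd ⟨k, rfl⟩ hir
      rw [MvPolynomial.mem_vars] at hiv
      obtain ⟨ν, hν, hνk⟩ := hiv
      calc B = Aux.wt m B (Sum.inl k₀) := rfl
      _ ≤ weight (Aux.wt m B) ν :=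
          le_weight_of_ne_zero (fun s => Nat.zero_le _) (Finsupp.mem_support_iff.mp hνk)
      _ ≤ D := hsupp ν hν
    have hv' : (D - B) + B = D := by omega
    -- some CN is nonzero
    have hCNex : ∃ N : Fin m, Aux.CNvec β lam f (N : ℕ) ≠ 0 := by
      by_contra hall
      push_neg at hall
      set μ : Fin m → ℂ := fun k =>
        β k * (lam k * (Polynomial.derivative (Aux.Epoly lam)).eval (lam k)) with hμ
      have hzero : ∀ k, μ k • pderiv (Sum.inl k) F = 0 := by
        refine Aux.vandermonde_extract hdist μ (fun k => pderiv (Sum.inl k) F) fun N => ?_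
        have := Aux.pi_CN_mid (β := β) (lam := lam) hB hsupp hv' (N : ℕ)
        rw [hall N, map_zero] at this
        exact this.symm
      have hpd : ∀ k, pderiv (Sum.inl k) F = 0 := by
        intro k
        rcases smul_eq_zero.mp (hzero k) with h | h
        · exact absurd h (by
            rw [hμ]
            exact mul_ne_zero (hβ k)
              (mul_ne_zero (hlam k) (Aux.Epoly_deriv_ne hdist k)))
        · exact h
      obtain ⟨τ, hτ⟩ := MvPolynomial.support_nonempty.mpr hFne
      obtain ⟨hτf, hτD⟩ := hFsup τ hτ
      have hex : ∃ k, τ (Sum.inl k) ≠ 0 := by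
        by_contra hno
        push_neg at hno
        have h1 : weight (Aux.wt m B) τ ≤ τ.sum fun _ e => e :=
          Aux.weight_le_degree_of_no_inl B τ hno
        have h2 : (τ.sum fun _ e => e) ≤ f.totalDegree := MvPolynomial.le_totalDegree hτf
        omega
      obtain ⟨k₁, hk₁⟩ := hex
      exact Aux.coeff_pderiv_ne_zero (Sum.inl k₁) F τ hτ hk₁ (hpd k₁)
    obtain ⟨N, hCNne⟩ := hCNex
    have hmemCN : Aux.CNvec β lam f (N : ℕ) ∈ S := by
      rw [Aux.CNvec]
      exact Submodule.sum_mem S fun n _ => Submodule.smul_mem S _ (hmemC _)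
    have part3 : ((m : Cardinal) + 2) ≤ Module.rank ℂ S :=
      Aux.rank_ge_of_CN hβ hlam hdist hf hB hsupp hFne _ hCNne
        (Aux.pi_CN_high hB hsupp (by omega) (N : ℕ))
        (Aux.pi_CN_top hB hsupp (N : ℕ))
        S hmemf (fun j => hmemA _) hmemCN
    rw [hrank] at part3
    have hle : ((m + 2 : ℕ) : Cardinal) ≤ ((m + 1 : ℕ) : Cardinal) := by
      push_cast
      exact part3
    exact absurd (Nat.cast_le.mp hle) (by omega)
  · -- f ∈ N → equality
    intro hfN
    refine le_antisymm ?_ part1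
    set gfun : Option (Fin m) → TT m := fun o => o.elim f (fun k => X (Sum.inr k) * f)
      with hgfun
    have hle : S ≤ Submodule.span ℂ (Set.range gfun) := by
      rw [hSdef]
      rw [Submodule.span_le]
      rintro x ((rfl | ⟨n, rfl⟩) | ⟨n, rfl⟩)
      · exact Submodule.subset_span ⟨none, rfl⟩
      · unfold tA
        refine Submodule.sum_mem _ fun k _ => Submodule.smul_mem _ _ ?_
        rw [Aux.shf_fix k n hfN]
        exact Submodule.subset_span ⟨some k, rfl⟩
      · unfold tC
        refine Submodule.sum_mem _ fun k _ => Submodule.smul_mem _ _ ?_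
        rw [Aux.shf_fix k n hfN]
        exact Submodule.subset_span ⟨none, rfl⟩
    have h1 : Module.rank ℂ S ≤ Module.rank ℂ (Submodule.span ℂ (Set.range gfun)) :=
      Submodule.rank_mono hle
    have h2 : Module.rank ℂ (Submodule.span ℂ (Set.range gfun))
        ≤ Cardinal.mk (Set.range gfun) := rank_span_le _
    have h3 : Cardinal.mk (Set.range gfun) ≤ Cardinal.mk (Option (Fin m)) :=
      Cardinal.mk_range_le
    have h4 : Cardinal.mk (Option (Fin m)) = (m : Cardinal) + 1 := by simp
    calc Module.rank ℂ S ≤ _ := h1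
    _ ≤ _ := h2
    _ ≤ _ := h3
    _ = _ := h4

end
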